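/- Let (X,d) be a metric space, ε > 0, and x, y ∈ X with d_ε(x,y) < ∞. Let N_ε(x,y) denote the minimal N such that there exists an ε-chain {x_i}_{i=0}^N from x to y. Then ⌈d_ε(x,y)/ε⌉ ≤ N_ε(x,y) ≤ 9 ⌈d_ε(x,y)/ε⌉. -/

import Mathlib

open Metric Set Filter

/-- `c` is an ε-chain of length `N` from `x` to `y`. -/
def IsEpsChain {X : Type*} [MetricSpace X] (ε : ℝ) (x y : X) (N : ℕ) (c : ℕ → X) : Prop :=
  c 0 = x ∧ c N = y ∧ ∀ i < N, dist (c i) (c (i + 1)) < ε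

/-- The ε-chain distance `d_ε(x,y)`: infimum of chain lengths, `∞` if no chain exists. -/
noncomputable def chainDist {X : Type*} [MetricSpace X] (ε : ℝ) (x y : X) : ENNReal :=
  ⨅ p : {p : ℕ × (ℕ → X) // IsEpsChain ε x y p.1 p.2},
    ∑ i ∈ Finset.range p.1.1, ENNReal.ofReal (dist (p.1.2 i) (p.1.2 (i + 1)))

/-- `N_ε(x,y)`: minimal number of steps of an ε-chain from `x` to `y`. -/
noncomputable def chainCount {X : Type*} [MetricSpace X] (ε : ℝ) (x y : X) : ℕ :=
  sInf {N | ∃ c : ℕ → X, IsEpsChain ε x y N c}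

lemma chain_shorten {X : Type*} [MetricSpace X] {ε : ℝ} {x y : X} :
    ∀ N : ℕ, ∀ c : ℕ → X, IsEpsChain ε x y N c →
    ∃ N' c', IsEpsChain ε x y N' c' ∧ N' ≤ N ∧
      (∑ i ∈ Finset.range N', dist (c' i) (c' (i + 1))) ≤
        (∑ i ∈ Finset.range N, dist (c i) (c (i + 1))) ∧
      ∀ i, i + 2 ≤ N' → ε ≤ dist (c' i) (c' (i + 2)) := by
  intro N
  induction N using Nat.strong_induction_on with
  | _ N IH =>
    intro c hc
    by_cases hgood : ∀ i, i + 2 ≤ N → ε ≤ dist (c i) (c (i + 2))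
    · exact ⟨N, c, hc, le_refl _, le_refl _, hgood⟩
    · push_neg at hgood
      obtain ⟨i, hi2, hlt⟩ := hgood
      have hN2 : 2 ≤ N := le_trans (by omega) hi2
      set c' : ℕ → X := fun j => if j ≤ i then c j else c (j + 1) with hc'
      have hchain' : IsEpsChain ε x y (N - 1) c' := by
        refine ⟨?_, ?_, ?_⟩
        · simp only [hc', if_pos (Nat.zero_le i)]; exact hc.1
        · have : ¬ (N - 1 ≤ i) := by omega
          simp only [hc', if_neg this]
          have : N - 1 + 1 = N := by omega
          rw [this]; exact hc.2.1
        · intro j hj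
          rcases lt_trichotomy j i with h | h | h
          · have h1 : j ≤ i := le_of_lt h
            have h2 : j + 1 ≤ i := h
            simp only [hc', if_pos h1, if_pos h2]
            exact hc.2.2 j (by omega)
          · subst h
            have h2 : ¬ (j + 1 ≤ j) := by omega
            simp only [hc', if_pos (le_refl j), if_neg h2]
            exact hlt
          · have h1 : ¬ (j ≤ i) := by omega
            have h2 : ¬ (j + 1 ≤ i) := by omega
            simp only [hc', if_neg h1, if_neg h2]
            exact hc.2.2 (j + 1) (by omega)
      have hsum : (∑ j ∈ Finset.range (N - 1), dist (c' j) (c' (j + 1))) ≤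
          ∑ j ∈ Finset.range N, dist (c j) (c (j + 1)) := by
        have hsplit' : (∑ j ∈ Finset.range (N - 1), dist (c' j) (c' (j + 1))) =
            (∑ j ∈ Finset.range i, dist (c' j) (c' (j + 1))) + dist (c' i) (c' (i + 1)) +
            (∑ j ∈ Finset.Ico (i + 1) (N - 1), dist (c' j) (c' (j + 1))) := by
          rw [Finset.range_eq_Ico, ← Finset.sum_Ico_consecutive _ (Nat.zero_le (i + 1)) (by omega : i + 1 ≤ N - 1),
            ← Finset.range_eq_Ico, Finset.sum_range_succ]
        have hsplit : (∑ j ∈ Finset.range N, dist (c j) (c (j + 1))) =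
            (∑ j ∈ Finset.range i, dist (c j) (c (j + 1))) + dist (c i) (c (i + 1)) +
            dist (c (i + 1)) (c (i + 2)) +
            (∑ j ∈ Finset.Ico (i + 2) N, dist (c j) (c (j + 1))) := by
          rw [Finset.range_eq_Ico, ← Finset.sum_Ico_consecutive _ (Nat.zero_le (i + 2)) (by omega : i + 2 ≤ N),
            ← Finset.range_eq_Ico, Finset.sum_range_succ, Finset.sum_range_succ]
        rw [hsplit', hsplit]
        have e1 : (∑ j ∈ Finset.range i, dist (c' j) (c' (j + 1))) =
            ∑ j ∈ Finset.range i, dist (c j) (c (j + 1)) := by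
          apply Finset.sum_congr rfl
          intro j hj
          rw [Finset.mem_range] at hj
          simp only [hc', if_pos (le_of_lt hj), if_pos (Nat.succ_le_of_lt hj)]
        have e2 : dist (c' i) (c' (i + 1)) = dist (c i) (c (i + 2)) := by
          simp only [hc', if_pos (le_refl i), if_neg (by omega : ¬ i + 1 ≤ i)]
        have e3 : (∑ j ∈ Finset.Ico (i + 1) (N - 1), dist (c' j) (c' (j + 1))) =
            ∑ j ∈ Finset.Ico (i + 2) N, dist (c j) (c (j + 1)) := by
          rw [Finset.sum_Ico_eq_sum_range, Finset.sum_Ico_eq_sum_range]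
          have hn : N - 1 - (i + 1) = N - (i + 2) := by omega
          rw [hn]
          apply Finset.sum_congr rfl
          intro k _
          have h1 : ¬ (i + 1 + k ≤ i) := by omega
          have h2 : ¬ (i + 1 + k + 1 ≤ i) := by omega
          simp only [hc', if_neg h1, if_neg h2]
          congr 2 <;> omega
        rw [e1, e2, e3]
        have := dist_triangle (c i) (c (i + 1)) (c (i + 2))
        linarith
      obtain ⟨N', c'', hchain'', hle, hsum', hspread⟩ := IH (N - 1) (by omega) c' hchain'
      exact ⟨N', c'', hchain'', by omega, le_trans hsum' hsum, hspread⟩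

lemma chain_pair_lb {X : Type*} [MetricSpace X] {ε : ℝ} {N : ℕ} {c : ℕ → X}
    (hspread : ∀ i, i + 2 ≤ N → ε ≤ dist (c i) (c (i + 2))) :
    ((N / 2 : ℕ) : ℝ) * ε ≤ ∑ i ∈ Finset.range N, dist (c i) (c (i + 1)) := by
  have key : ∀ m : ℕ, 2 * m ≤ N →
      (m : ℝ) * ε ≤ ∑ i ∈ Finset.range (2 * m), dist (c i) (c (i + 1)) := by
    intro m
    induction m with
    | zero => simp
    | succ m ih =>
      intro hm
      have h1 : 2 * (m + 1) = 2 * m + 1 + 1 := by ring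
      rw [h1, Finset.sum_range_succ, Finset.sum_range_succ]
      have h2 : ε ≤ dist (c (2 * m)) (c (2 * m + 2)) := hspread (2 * m) (by omega)
      have h3 := dist_triangle (c (2 * m)) (c (2 * m + 1)) (c (2 * m + 2))
      have h4 := ih (by omega)
      push_cast
      have : (2 * m + 1 + 1) = 2 * m + 2 := by omega
      rw [this]
      linarith
  calc ((N / 2 : ℕ) : ℝ) * ε ≤ ∑ i ∈ Finset.range (2 * (N / 2)), dist (c i) (c (i + 1)) :=
        key (N / 2) (by omega)
    _ ≤ ∑ i ∈ Finset.range N, dist (c i) (c (i + 1)) := by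
        apply Finset.sum_le_sum_of_subset_of_nonneg
        · exact Finset.range_subset_range.mpr (by omega)
        · intros; exact dist_nonneg

lemma chainDist_le {X : Type*} [MetricSpace X] {ε : ℝ} {x y : X} {N : ℕ} {c : ℕ → X}
    (h : IsEpsChain ε x y N c) :
    chainDist ε x y ≤ ENNReal.ofReal (∑ i ∈ Finset.range N, dist (c i) (c (i + 1))) := by
  have := iInf_le (fun p : {p : ℕ × (ℕ → X) // IsEpsChain ε x y p.1 p.2} =>
    ∑ i ∈ Finset.range p.1.1, ENNReal.ofReal (dist (p.1.2 i) (p.1.2 (i + 1)))) ⟨(N, c), h⟩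
  rwa [ENNReal.ofReal_sum_of_nonneg (fun i _ => dist_nonneg)]

theorem stmt_3 {X : Type*} [MetricSpace X] (ε : ℝ) (hε : 0 < ε) (x y : X)
    (hfin : chainDist ε x y < ⊤) :
    ⌈(chainDist ε x y).toReal / ε⌉ ≤ (chainCount ε x y : ℤ) ∧
    (chainCount ε x y : ℤ) ≤ 9 * ⌈(chainDist ε x y).toReal / ε⌉ := by
  set D := (chainDist ε x y).toReal with hD
  -- a chain exists
  obtain ⟨p, -⟩ := iInf_lt_iff.mp hfin
  have hne : {N | ∃ c : ℕ → X, IsEpsChain ε x y N c}.Nonempty := ⟨p.1.1, p.1.2, p.2⟩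
  obtain ⟨c₀, hc₀⟩ : ∃ c : ℕ → X, IsEpsChain ε x y (chainCount ε x y) c := Nat.sInf_mem hne
  set N₀ := chainCount ε x y with hN₀
  -- lower bound
  have hlow : ⌈D / ε⌉ ≤ (N₀ : ℤ) := by
    have h1 : chainDist ε x y ≤ ENNReal.ofReal ((N₀ : ℝ) * ε) := by
      refine le_trans (chainDist_le hc₀) (ENNReal.ofReal_le_ofReal ?_)
      calc (∑ i ∈ Finset.range N₀, dist (c₀ i) (c₀ (i + 1)))
          ≤ ∑ _i ∈ Finset.range N₀, ε :=
            Finset.sum_le_sum (fun i hi => (hc₀.2.2 i (Finset.mem_range.mp hi)).le)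
        _ = (N₀ : ℝ) * ε := by simp [mul_comm]
    have h2 : D ≤ (N₀ : ℝ) * ε := by
      have := ENNReal.toReal_mono ENNReal.ofReal_ne_top h1
      rwa [ENNReal.toReal_ofReal (by positivity)] at this
    rw [Int.ceil_le]
    push_cast
    rw [div_le_iff₀ hε]
    linarith
  refine ⟨hlow, ?_⟩
  by_cases hxy : x = y
  · have h0 : IsEpsChain ε x y 0 (fun _ => x) := ⟨rfl, hxy, fun i hi => by omega⟩
    have hN0 : N₀ = 0 := by
      rw [hN₀, chainCount]
      exact Nat.sInf_eq_zero.mpr (Or.inl ⟨fun _ => x, h0⟩)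
    have hDle : chainDist ε x y ≤ 0 := by simpa using chainDist_le h0
    have hD0 : D = 0 := by
      rw [hD, le_antisymm hDle zero_le]; simp
    rw [hN0, hD0]
    simp
  · -- D > 0
    have hDpos : 0 < D := by
      have h1 : ENNReal.ofReal (dist x y) ≤ chainDist ε x y := by
        refine le_iInf fun q => ?_
        rw [← ENNReal.ofReal_sum_of_nonneg (fun i _ => dist_nonneg)]
        apply ENNReal.ofReal_le_ofReal
        have := dist_le_range_sum_dist q.1.2 q.1.1
        rwa [q.2.1, q.2.2.1] at this
      have h2 : dist x y ≤ D := by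
        have := ENNReal.toReal_mono hfin.ne h1
        rwa [ENNReal.toReal_ofReal dist_nonneg] at this
      have := dist_pos.mpr hxy
      linarith
    set K := ⌈D / ε⌉ with hK
    have hKpos : 1 ≤ K := Int.ceil_pos.mpr (div_pos hDpos hε)
    have hDK : D ≤ (K : ℝ) * ε := by
      calc D = D / ε * ε := by field_simp
        _ ≤ (K : ℝ) * ε := by
            apply mul_le_mul_of_nonneg_right (Int.le_ceil _) hε.le
    -- get a chain with sum < 2D
    have hlt : chainDist ε x y < ENNReal.ofReal (2 * D) := by
      rw [show chainDist ε x y = ENNReal.ofReal D from (ENNReal.ofReal_toReal hfin.ne).symm]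
      exact (ENNReal.ofReal_lt_ofReal_iff (by linarith)).mpr (by linarith)
    obtain ⟨q, hq⟩ := iInf_lt_iff.mp hlt
    rw [← ENNReal.ofReal_sum_of_nonneg (fun i _ => dist_nonneg)] at hq
    have hqsum : (∑ i ∈ Finset.range q.1.1, dist (q.1.2 i) (q.1.2 (i + 1))) < 2 * D :=
      (ENNReal.ofReal_lt_ofReal_iff (by linarith)).mp hq
    obtain ⟨N', c', hchain', hle', hsum', hspread⟩ := chain_shorten q.1.1 q.1.2 q.2
    have hpair := chain_pair_lb hspread
    have hhalf : ((N' / 2 : ℕ) : ℝ) * ε < 2 * (K : ℝ) * ε := by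
      calc ((N' / 2 : ℕ) : ℝ) * ε ≤ _ := hpair
        _ ≤ _ := hsum'
        _ < 2 * D := hqsum
        _ ≤ 2 * (K : ℝ) * ε := by linarith
    have hhalf' : ((N' / 2 : ℕ) : ℤ) < 2 * K := by
      have h := (mul_lt_mul_iff_left₀ hε).mp hhalf
      have h2 : ((((N' / 2 : ℕ) : ℤ)) : ℝ) < (((2 * K : ℤ)) : ℝ) := by
        rw [Int.cast_natCast]
        push_cast
        linarith
      exact_mod_cast h2
    have hmem : N' ∈ {N | ∃ c : ℕ → X, IsEpsChain ε x y N c} := ⟨c', hchain'⟩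
    have hcount : (chainCount ε x y : ℤ) ≤ (N' : ℤ) := by
      exact_mod_cast Nat.sInf_le hmem
    have hN' : (N' : ℤ) ≤ 2 * ((N' / 2 : ℕ) : ℤ) + 1 := by
      have : N' ≤ 2 * (N' / 2) + 1 := by omega
      exact_mod_cast this
    omega
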